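/- Let r₀ > 0, let β : [r₀,∞) → ℝ be continuous and strictly positive, let ψ : [r₀,∞) → ℝ be continuous and nonnegative with ∫_{r₀}^∞ β(r̃) ψ(r̃)/r̃ dr̃ < ∞, and define I : [r₀,∞) → ℝ by I(r) := r² ∫_r^∞ β(r̃) ψ(r̃)/r̃ dr̃. Let α : [r₀,∞) → ℝ be nonnegative and such that the function w(r) := α(r)/(r³ β(r)) is continuously differentiable on [r₀,∞). Assume that lim_{r→∞} w(r) I(r)² = 0 and that the functions r ↦ (α(r)/(r² β(r))) I'(r)², r ↦ |w'(r)| I(r)² and r ↦ (α(r) ψ(r)/r) |I'(r)| are Lebesgue integrable on (r₀,∞). Then ∫_{r₀}^∞ (α(r) ψ(r)/r) I'(r) dr = −∫_{r₀}^∞ (α(r)/(r² β(r))) I'(r)² dr − ∫_{r₀}^∞ w'(r) I(r)² dr − (α(r₀)/(r₀³ β(r₀))) I(r₀)². -/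

import Mathlib

open MeasureTheory Set Filter

theorem stmt6 (r₀ : ℝ) (hr₀ : 0 < r₀) (β ψ α w w' I : ℝ → ℝ)
    (hβc : ContinuousOn β (Set.Ici r₀)) (hβpos : ∀ r ∈ Set.Ici r₀, 0 < β r)
    (hψc : ContinuousOn ψ (Set.Ici r₀)) (hψ0 : ∀ r ∈ Set.Ici r₀, 0 ≤ ψ r)
    (hint : IntegrableOn (fun rt => β rt * ψ rt / rt) (Set.Ioi r₀))
    (hI : ∀ r, I r = r ^ 2 * ∫ rt in Set.Ioi r, β rt * ψ rt / rt)
    (hα0 : ∀ r ∈ Set.Ici r₀, 0 ≤ α r)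
    (hw : ∀ r, w r = α r / (r ^ 3 * β r))
    (hwd : ∀ r ∈ Set.Ici r₀, HasDerivWithinAt w (w' r) (Set.Ici r₀) r)
    (hw'c : ContinuousOn w' (Set.Ici r₀))
    (hlim : Filter.Tendsto (fun r => w r * I r ^ 2) Filter.atTop (nhds 0))
    (hint1 : IntegrableOn (fun r => α r / (r ^ 2 * β r) * (deriv I r) ^ 2) (Set.Ioi r₀))
    (hint2 : IntegrableOn (fun r => |w' r| * I r ^ 2) (Set.Ioi r₀))
    (hint3 : IntegrableOn (fun r => α r * ψ r / r * |deriv I r|) (Set.Ioi r₀)) :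
    ∫ r in Set.Ioi r₀, α r * ψ r / r * deriv I r
      = -(∫ r in Set.Ioi r₀, α r / (r ^ 2 * β r) * (deriv I r) ^ 2)
        - (∫ r in Set.Ioi r₀, w' r * I r ^ 2)
        - α r₀ / (r₀ ^ 3 * β r₀) * I r₀ ^ 2 := by
  set f : ℝ → ℝ := fun rt => β rt * ψ rt / rt with hf_def
  set J : ℝ → ℝ := fun r => ∫ rt in Set.Ioi r, f rt with hJ_def
  have hfc : ContinuousOn f (Ici r₀) := by
    apply (hβc.mul hψc).div continuousOn_id
    intro r hr
    exact ne_of_gt (lt_of_lt_of_le hr₀ hr)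
  -- splitting identity for J
  have hJeq : ∀ r ∈ Ici r₀, J r = J r₀ - ∫ x in r₀..r, f x := by
    intro r hr
    have hsplit : (∫ x in Ioc r₀ r, f x) + (∫ x in Ioi r, f x) = ∫ x in Ioi r₀, f x := by
      rw [← setIntegral_union (Set.Ioc_disjoint_Ioi le_rfl) measurableSet_Ioi
        (hint.mono_set Set.Ioc_subset_Ioi_self) (hint.mono_set (Set.Ioi_subset_Ioi hr))]
      rw [Set.Ioc_union_Ioi_eq_Ioi hr]
    rw [intervalIntegral.integral_of_le hr]
    simp only [hJ_def]
    linarith [hsplit]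
  -- derivative of J
  have hJd : ∀ r ∈ Ioi r₀, HasDerivAt J (-(f r)) r := by
    intro r hr
    have hfi : IntervalIntegrable f volume r₀ r :=
      (intervalIntegrable_iff_integrableOn_Ioc_of_le (le_of_lt hr)).2
        (hint.mono_set Set.Ioc_subset_Ioi_self)
    have hca : ContinuousAt f r := hfc.continuousAt (Ici_mem_nhds hr)
    have hsm : StronglyMeasurableAtFilter f (nhds r) volume :=
      ContinuousOn.stronglyMeasurableAtFilter isOpen_Ioi (hfc.mono Set.Ioi_subset_Ici_self) r hr
    have hd := intervalIntegral.integral_hasDerivAt_right hfi hsm hca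
    have hd2 : HasDerivAt (fun u => J r₀ - ∫ x in r₀..u, f x) (-(f r)) r := by
      simpa using hd.const_sub (J r₀)
    apply hd2.congr_of_eventuallyEq
    filter_upwards [Ioi_mem_nhds hr] with x hx
    exact hJeq x (mem_Ici.2 (le_of_lt hx))
  -- derivative of I
  set D : ℝ → ℝ := fun r => 2 * I r / r - r * β r * ψ r with hD_def
  have hId : ∀ r ∈ Ioi r₀, HasDerivAt I (D r) r := by
    intro r hr
    have hrpos : 0 < r := hr₀.trans hr
    have h1 : HasDerivAt (fun u : ℝ => u ^ 2) (2 * r) r := by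
      simpa using hasDerivAt_pow 2 r
    have h := h1.mul (hJd r hr)
    have hIfun : I = fun u => u ^ 2 * J u := funext hI
    rw [hIfun]
    refine h.congr_deriv ?_
    have hIr : I r = r ^ 2 * J r := hI r
    simp only [hD_def, hIr, hf_def]
    field_simp
    ring
  have hderiveq : ∀ r ∈ Ioi r₀, deriv I r = D r := fun r hr => (hId r hr).deriv
  -- continuity of J on Ici r₀
  have hJc : ContinuousOn J (Ici r₀) := by
    intro x hx
    have hP : ContinuousWithinAt (fun b => ∫ t in r₀..b, f t) (Icc r₀ (x + 1)) x := by
      apply intervalIntegral.continuousWithinAt_primitive (measure_singleton x)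
      rw [min_self, max_comm, max_eq_left (by linarith [hx.out] : r₀ ≤ x + 1)]
      exact (intervalIntegrable_iff_integrableOn_Ioc_of_le (by linarith [hx.out])).2
        (hint.mono_set Set.Ioc_subset_Ioi_self)
    have hP2 : ContinuousWithinAt (fun b => J r₀ - ∫ t in r₀..b, f t) (Icc r₀ (x + 1)) x :=
      continuousWithinAt_const.sub hP
    have hmem : Icc r₀ (x + 1) ∈ nhdsWithin x (Ici r₀) := by
      rw [← Set.Ici_inter_Iic]
      exact Filter.inter_mem self_mem_nhdsWithin
        (mem_nhdsWithin_of_mem_nhds (Iic_mem_nhds (by linarith)))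
    refine ContinuousWithinAt.congr (hP2.mono_of_mem_nhdsWithin hmem) ?_ ?_
    · intro y hy; exact hJeq y hy
    · exact hJeq x hx
  have hIc : ContinuousOn I (Ici r₀) := by
    have : ContinuousOn (fun r => r ^ 2 * J r) (Ici r₀) :=
      ((continuousOn_id.pow 2).mul hJc)
    exact this.congr fun r _ => hI r
  have hwc : ContinuousOn w (Ici r₀) := fun r hr => (hwd r hr).continuousWithinAt
  -- continuity of α and D on Ici r₀
  have hαeq : ∀ r ∈ Ici r₀, α r = w r * (r ^ 3 * β r) := by
    intro r hr
    have hr0 : (0:ℝ) < r := lt_of_lt_of_le hr₀ hr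
    have hb := hβpos r hr
    rw [hw r]
    field_simp
  have hαc : ContinuousOn α (Ici r₀) := by
    refine (hwc.mul ((continuousOn_id.pow 3).mul hβc)).congr ?_
    intro r hr; exact hαeq r hr
  have hDc : ContinuousOn D (Ici r₀) := by
    apply ContinuousOn.sub
    · exact (continuousOn_const.mul hIc).div continuousOn_id
        (fun r hr => ne_of_gt (lt_of_lt_of_le hr₀ hr))
    · exact (continuousOn_id.mul hβc).mul hψc
  -- the three integrands
  set g1 : ℝ → ℝ := fun r => α r * ψ r / r * D r with hg1_def
  set g2 : ℝ → ℝ := fun r => α r / (r ^ 2 * β r) * D r ^ 2 with hg2_def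
  set g3 : ℝ → ℝ := fun r => w' r * I r ^ 2 with hg3_def
  have hg1c : ContinuousOn g1 (Ici r₀) := by
    exact (((hαc.mul hψc).div continuousOn_id
      (fun r hr => ne_of_gt (lt_of_lt_of_le hr₀ hr))).mul hDc)
  have hg2c : ContinuousOn g2 (Ici r₀) := by
    refine (hαc.div ((continuousOn_id.pow 2).mul hβc) ?_).mul (hDc.pow 2)
    intro r hr
    have : (0:ℝ) < r := lt_of_lt_of_le hr₀ hr
    exact ne_of_gt (mul_pos (pow_pos this 2) (hβpos r hr))
  have hg3c : ContinuousOn g3 (Ici r₀) := hw'c.mul (hIc.pow 2)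
  have hmeasIoi : MeasurableSet (Ioi r₀ : Set ℝ) := measurableSet_Ioi
  -- integrability
  have habs : IntegrableOn (fun r => α r * ψ r / r * |D r|) (Ioi r₀) := by
    refine hint3.congr_fun ?_ hmeasIoi
    intro r hr
    simp only [hderiveq r hr]
  have hg1int : IntegrableOn g1 (Ioi r₀) := by
    refine habs.mono' ((hg1c.mono Set.Ioi_subset_Ici_self).aestronglyMeasurable hmeasIoi) ?_
    rw [ae_restrict_iff' hmeasIoi]
    filter_upwards with r hr
    have hr' : r ∈ Ici r₀ := mem_Ici.2 (le_of_lt hr)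
    have h1 : 0 ≤ α r * ψ r / r :=
      div_nonneg (mul_nonneg (hα0 r hr') (hψ0 r hr')) (le_of_lt (hr₀.trans hr))
    simp only [hg1_def, Real.norm_eq_abs, abs_mul, abs_of_nonneg h1]
    exact le_refl _
  have hg2int : IntegrableOn g2 (Ioi r₀) := by
    refine hint1.congr_fun ?_ hmeasIoi
    intro r hr
    simp only [hg2_def, hderiveq r hr]
  have hg3int : IntegrableOn g3 (Ioi r₀) := by
    refine hint2.mono' ((hg3c.mono Set.Ioi_subset_Ici_self).aestronglyMeasurable hmeasIoi) ?_
    filter_upwards with r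
    simp only [hg3_def, Real.norm_eq_abs, abs_mul, abs_pow, sq_abs]
    exact le_refl _
  -- the key pointwise identity and derivative of F = w * I^2
  set F : ℝ → ℝ := fun r => w r * I r ^ 2 with hF_def
  set G : ℝ → ℝ := fun r => g3 r + g1 r + g2 r with hG_def
  have hFd : ∀ r ∈ Ioi r₀, HasDerivAt F (G r) r := by
    intro r hr
    have hr' : r ∈ Ici r₀ := mem_Ici.2 (le_of_lt hr)
    have hrpos : (0:ℝ) < r := hr₀.trans hr
    have hb : (0:ℝ) < β r := hβpos r hr'
    have hwda : HasDerivAt w (w' r) r :=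
      (hwd r hr').hasDerivAt (Ici_mem_nhds hr)
    have hI2 : HasDerivAt (fun u => I u ^ 2) (2 * I r ^ 1 * D r) r := (hId r hr).pow 2
    have h := hwda.mul hI2
    have hkey : w' r * I r ^ 2 + w r * ((2:ℕ) * I r ^ 1 * D r) = G r := by
      have hα : α r = w r * (r ^ 3 * β r) := hαeq r hr'
      simp only [hG_def, hg1_def, hg2_def, hg3_def, hD_def, hα, pow_one]
      field_simp
      ring
    rw [← hkey]
    exact h.congr_deriv (by push_cast; ring)
  have hGint : IntegrableOn G (Ioi r₀) := (hg3int.add hg1int).add hg2int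
  have hFc : ContinuousWithinAt F (Ici r₀) r₀ :=
    (hwc.mul (hIc.pow 2)) r₀ Set.self_mem_Ici
  have hmain : ∫ r in Ioi r₀, G r = 0 - F r₀ :=
    integral_Ioi_of_hasDerivAt_of_tendsto hFc hFd hGint hlim
  have hsplitG : ∫ r in Ioi r₀, G r =
      (∫ r in Ioi r₀, g3 r) + (∫ r in Ioi r₀, g1 r) + (∫ r in Ioi r₀, g2 r) := by
    have hA := integral_add (μ := volume.restrict (Ioi r₀)) (hg3int.add hg1int) hg2int
    have hB := integral_add (μ := volume.restrict (Ioi r₀)) hg3int hg1int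
    simp only [Pi.add_apply] at hA hB
    simp only [hG_def]
    rw [hA, hB]
  -- rewrite the goal integrals
  have e1 : ∫ r in Ioi r₀, α r * ψ r / r * deriv I r = ∫ r in Ioi r₀, g1 r := by
    apply setIntegral_congr_fun hmeasIoi
    intro r hr
    simp only [hg1_def, hderiveq r hr]
  have e2 : ∫ r in Ioi r₀, α r / (r ^ 2 * β r) * (deriv I r) ^ 2 = ∫ r in Ioi r₀, g2 r := by
    apply setIntegral_congr_fun hmeasIoi
    intro r hr
    simp only [hg2_def, hderiveq r hr]
  have e3 : F r₀ = α r₀ / (r₀ ^ 3 * β r₀) * I r₀ ^ 2 := by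
    simp only [hF_def, hw r₀]
  rw [e1, e2]
  have : (∫ r in Ioi r₀, g3 r) + (∫ r in Ioi r₀, g1 r) + (∫ r in Ioi r₀, g2 r) = 0 - F r₀ := by
    rw [← hsplitG]; exact hmain
  rw [e3] at this
  linarith
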